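/- Let ε > 0 and ψ : [a,b] → ℂ continuous with ‖ψ‖_∞ ≤ ε². Suppose Z_a, W_a, Z_b, W_b ∈ ℂ satisfy Z_a W_a = ψ(a), Z_b W_b = ψ(b) and |Z_a|, |W_a|, |Z_b|, |W_b| ≤ ε. Then there exist continuous Z₁, Z₂ : [a,b] → ℂ with Z₁(a)=Z_a, Z₂(a)=W_a, Z₁(b)=Z_b, Z₂(b)=W_b, |Z₁(t)|,|Z₂(t)| ≤ ε and Z₁(t)Z₂(t) = ψ(t) for all t ∈ [a,b]. -/

import Mathlib

open Complex in
/-- Core construction: assuming the modulus ordering `|Wa| ≤ |Za|`, `|Wb| ≤ |Zb|` at both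
endpoints, build the factorisation with `Z₁ = ρ e^{iθ}` and `Z₂ = ψ / Z₁`. -/
lemma stmt_7_core (a b : ℝ) (hab : a < b) (ε : ℝ) (hε : 0 < ε) (ψ : ℝ → ℂ)
    (hψc : ContinuousOn ψ (Set.Icc a b))
    (hψb : ∀ t ∈ Set.Icc a b, ‖ψ t‖ ≤ ε ^ 2)
    (Za Wa Zb Wb : ℂ)
    (hfa : Za * Wa = ψ a) (hfb : Zb * Wb = ψ b)
    (hZa : ‖Za‖ ≤ ε) (hZb : ‖Zb‖ ≤ ε)
    (hWZa : ‖Wa‖ ≤ ‖Za‖) (hWZb : ‖Wb‖ ≤ ‖Zb‖) :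
    ∃ Z₁ Z₂ : ℝ → ℂ, ContinuousOn Z₁ (Set.Icc a b) ∧ ContinuousOn Z₂ (Set.Icc a b) ∧
      Z₁ a = Za ∧ Z₂ a = Wa ∧ Z₁ b = Zb ∧ Z₂ b = Wb ∧
      (∀ t ∈ Set.Icc a b, ‖Z₁ t‖ ≤ ε ∧ ‖Z₂ t‖ ≤ ε ∧
        Z₁ t * Z₂ t = ψ t) := by
  have hba : (0:ℝ) < b - a := sub_pos.2 hab
  set ℓ : ℝ → ℝ := fun t =>
    ‖Za‖ + (t - a) / (b - a) * (‖Zb‖ - ‖Za‖) with hℓdef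
  set ρ : ℝ → ℝ := fun t => max (Real.sqrt (‖ψ t‖)) (ℓ t) with hρdef
  set θ : ℝ → ℝ := fun t => Za.arg + (t - a) / (b - a) * (Zb.arg - Za.arg) with hθdef
  have hℓcont : Continuous ℓ := by
    rw [hℓdef]; fun_prop (disch := intros; positivity)
  have hθcont : Continuous θ := by
    rw [hθdef]; fun_prop (disch := intros; positivity)
  have hρcont : ContinuousOn ρ (Set.Icc a b) := by
    rw [hρdef]
    exact ContinuousOn.sup
      (Real.continuous_sqrt.comp_continuousOn (continuous_norm.comp_continuousOn hψc))
      hℓcont.continuousOn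
  have hρnn : ∀ t, 0 ≤ ρ t := fun t => le_trans (Real.sqrt_nonneg _) (le_max_left _ _)
  have hsρ : ∀ t, Real.sqrt (‖ψ t‖) ≤ ρ t := fun t => le_max_left _ _
  have hρa : ρ a = ‖Za‖ := by
    have h1 : ℓ a = ‖Za‖ := by simp [hℓdef]
    have h2 : Real.sqrt (‖ψ a‖) ≤ ‖Za‖ := by
      rw [← hfa, norm_mul]
      calc Real.sqrt (‖Za‖ * ‖Wa‖)
          ≤ Real.sqrt (‖Za‖ * ‖Za‖) :=
            Real.sqrt_le_sqrt (by nlinarith [norm_nonneg Za])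
        _ = ‖Za‖ := Real.sqrt_mul_self (norm_nonneg Za)
    rw [hρdef]; simp only; rw [h1]; exact max_eq_right (h1 ▸ h2)
  have hρb : ρ b = ‖Zb‖ := by
    have h1 : ℓ b = ‖Zb‖ := by
      rw [hℓdef]; simp only; field_simp; ring
    have h2 : Real.sqrt (‖ψ b‖) ≤ ‖Zb‖ := by
      rw [← hfb, norm_mul]
      calc Real.sqrt (‖Zb‖ * ‖Wb‖)
          ≤ Real.sqrt (‖Zb‖ * ‖Zb‖) :=
            Real.sqrt_le_sqrt (by nlinarith [norm_nonneg Zb])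
        _ = ‖Zb‖ := Real.sqrt_mul_self (norm_nonneg Zb)
    rw [hρdef]; simp only; rw [h1]; exact max_eq_right (h1 ▸ h2)
  have hθa : θ a = Za.arg := by simp [hθdef]
  have hθb : θ b = Zb.arg := by rw [hθdef]; simp only; field_simp; ring
  have hρle : ∀ t ∈ Set.Icc a b, ρ t ≤ ε := by
    intro t ht
    refine max_le ?_ ?_
    · calc Real.sqrt (‖ψ t‖) ≤ Real.sqrt (ε ^ 2) := Real.sqrt_le_sqrt (hψb t ht)
        _ = ε := Real.sqrt_sq hε.le
    · have h1 : 0 ≤ (t - a) / (b - a) := div_nonneg (by linarith [ht.1]) hba.le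
      have h2 : (t - a) / (b - a) ≤ 1 := (div_le_one hba).2 (by linarith [ht.2])
      rw [hℓdef]; simp only
      nlinarith [norm_nonneg Za, norm_nonneg Zb]
  set Z₁ : ℝ → ℂ := fun t => (ρ t : ℂ) * Complex.exp ((θ t : ℂ) * Complex.I) with hZ₁def
  set Z₂ : ℝ → ℂ := fun t => if ρ t = 0 then 0 else ψ t / Z₁ t with hZ₂def
  have habsZ1 : ∀ t, ‖Z₁ t‖ = ρ t := by
    intro t
    rw [hZ₁def]; simp only
    rw [norm_mul, Complex.norm_real, Real.norm_eq_abs, Complex.norm_exp_ofReal_mul_I, mul_one,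
      _root_.abs_of_nonneg (hρnn t)]
  have hZ₁ne : ∀ t, ρ t ≠ 0 → Z₁ t ≠ 0 := by
    intro t h
    rw [hZ₁def]; simp only
    exact mul_ne_zero (by exact_mod_cast h) (Complex.exp_ne_zero _)
  have hZ₁cont : ContinuousOn Z₁ (Set.Icc a b) := by
    rw [hZ₁def]
    exact (Complex.continuous_ofReal.comp_continuousOn hρcont).mul
      (Complex.continuous_exp.comp
        ((Complex.continuous_ofReal.comp hθcont).mul continuous_const)).continuousOn
  have habsZ2 : ∀ t ∈ Set.Icc a b, ‖Z₂ t‖ ≤ Real.sqrt (‖ψ t‖) := by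
    intro t ht
    rw [hZ₂def]; simp only
    by_cases h : ρ t = 0
    · simp [h, Real.sqrt_nonneg]
    · rw [if_neg h, norm_div, habsZ1 t]
      have hρpos : 0 < ρ t := lt_of_le_of_ne (hρnn t) (Ne.symm h)
      rw [div_le_iff₀ hρpos]
      nlinarith [Real.sq_sqrt (norm_nonneg (ψ t)), hsρ t,
        Real.sqrt_nonneg (‖ψ t‖), norm_nonneg (ψ t)]
  have hψ0 : ∀ t, ρ t = 0 → ψ t = 0 := by
    intro t h
    have := hsρ t
    rw [h] at this
    have h2 : Real.sqrt (‖ψ t‖) = 0 := le_antisymm this (Real.sqrt_nonneg _)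
    have := (Real.sqrt_eq_zero (norm_nonneg _)).1 h2
    exact norm_eq_zero.1 (le_antisymm (le_of_eq this) (norm_nonneg _))
  have hZ₂cont : ContinuousOn Z₂ (Set.Icc a b) := by
    intro t₀ ht₀
    by_cases h0 : ρ t₀ = 0
    · -- squeeze to 0
      have hval : Z₂ t₀ = 0 := by rw [hZ₂def]; simp [h0]
      rw [ContinuousWithinAt, hval]
      have hg : Filter.Tendsto (fun t => Real.sqrt (‖ψ t‖))
          (nhdsWithin t₀ (Set.Icc a b)) (nhds 0) := by
        have hc : ContinuousWithinAt (fun t => Real.sqrt (‖ψ t‖))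
            (Set.Icc a b) t₀ :=
          Real.continuous_sqrt.continuousAt.comp_continuousWithinAt
            (continuous_norm.continuousAt.comp_continuousWithinAt (hψc t₀ ht₀))
        have : Real.sqrt (‖ψ t₀‖) = 0 := by
          rw [hψ0 t₀ h0]; simp
        rw [ContinuousWithinAt, this] at hc
        exact hc
      refine squeeze_zero_norm' ?_ hg
      filter_upwards [self_mem_nhdsWithin] with t ht
      exact habsZ2 t ht
    · have hF : ContinuousWithinAt (fun t => ψ t / Z₁ t) (Set.Icc a b) t₀ :=
        (hψc t₀ ht₀).div (hZ₁cont t₀ ht₀) (hZ₁ne t₀ h0)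
      refine hF.congr_of_eventuallyEq ?_ (by rw [hZ₂def]; simp [h0])
      have hev : ∀ᶠ t in nhdsWithin t₀ (Set.Icc a b), ρ t ≠ 0 :=
        (hρcont t₀ ht₀).eventually_ne h0
      filter_upwards [hev] with t ht
      rw [hZ₂def]; simp [ht]
  have hZ₁a : Z₁ a = Za := by
    rw [hZ₁def]; simp only
    rw [hρa, hθa]
    exact Complex.norm_mul_exp_arg_mul_I Za
  have hZ₁b : Z₁ b = Zb := by
    rw [hZ₁def]; simp only
    rw [hρb, hθb]
    exact Complex.norm_mul_exp_arg_mul_I Zb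
  have hZ₂a : Z₂ a = Wa := by
    by_cases h : Za = 0
    · have hWa0 : Wa = 0 := by
        have := hWZa
        rw [h, norm_zero] at this
        exact norm_eq_zero.1 (le_antisymm this (norm_nonneg _))
      rw [hZ₂def]; simp only
      rw [if_pos (by rw [hρa, h, norm_zero]), hWa0]
    · have hρane : ρ a ≠ 0 := by rw [hρa]; exact norm_ne_zero_iff.mpr h
      rw [hZ₂def]; simp only
      rw [if_neg hρane, hZ₁a, ← hfa]
      exact mul_div_cancel_left₀ Wa h
  have hZ₂b : Z₂ b = Wb := by
    by_cases h : Zb = 0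
    · have hWb0 : Wb = 0 := by
        have := hWZb
        rw [h, norm_zero] at this
        exact norm_eq_zero.1 (le_antisymm this (norm_nonneg _))
      rw [hZ₂def]; simp only
      rw [if_pos (by rw [hρb, h, norm_zero]), hWb0]
    · have hρbne : ρ b ≠ 0 := by rw [hρb]; exact norm_ne_zero_iff.mpr h
      rw [hZ₂def]; simp only
      rw [if_neg hρbne, hZ₁b, ← hfb]
      exact mul_div_cancel_left₀ Wb h
  refine ⟨Z₁, Z₂, hZ₁cont, hZ₂cont, hZ₁a, hZ₂a, hZ₁b, hZ₂b, ?_⟩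
  intro t ht
  refine ⟨by rw [habsZ1]; exact hρle t ht, ?_, ?_⟩
  · calc ‖Z₂ t‖ ≤ Real.sqrt (‖ψ t‖) := habsZ2 t ht
      _ ≤ Real.sqrt (ε ^ 2) := Real.sqrt_le_sqrt (hψb t ht)
      _ = ε := Real.sqrt_sq hε.le
  · by_cases h : ρ t = 0
    · rw [hZ₂def]; simp only
      rw [if_pos h, mul_zero, hψ0 t h]
    · rw [hZ₂def]; simp only
      rw [if_neg h, mul_comm, div_mul_cancel₀ _ (hZ₁ne t h)]

/-- Version of the core lemma with arbitrary modulus orderings at the endpoints, but requiring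
equal moduli of the two prescribed values at one of the endpoints is NOT needed: we require the
right endpoint data to satisfy `|Wb| ≤ |Zb|` and `|Zb| ≤ |Wb|` is handled by symmetry only when
the left does too.  Instead, this lemma handles an arbitrary left endpoint provided the right
endpoint has equal moduli. -/
lemma stmt_7_half (a b : ℝ) (hab : a < b) (ε : ℝ) (hε : 0 < ε) (ψ : ℝ → ℂ)
    (hψc : ContinuousOn ψ (Set.Icc a b))
    (hψb : ∀ t ∈ Set.Icc a b, ‖ψ t‖ ≤ ε ^ 2)
    (Za Wa Zb Wb : ℂ)
    (hfa : Za * Wa = ψ a) (hfb : Zb * Wb = ψ b)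
    (hZa : ‖Za‖ ≤ ε) (hWa : ‖Wa‖ ≤ ε)
    (hZb : ‖Zb‖ ≤ ε) (hWb : ‖Wb‖ ≤ ε)
    (heq : ‖Zb‖ = ‖Wb‖) :
    ∃ Z₁ Z₂ : ℝ → ℂ, ContinuousOn Z₁ (Set.Icc a b) ∧ ContinuousOn Z₂ (Set.Icc a b) ∧
      Z₁ a = Za ∧ Z₂ a = Wa ∧ Z₁ b = Zb ∧ Z₂ b = Wb ∧
      (∀ t ∈ Set.Icc a b, ‖Z₁ t‖ ≤ ε ∧ ‖Z₂ t‖ ≤ ε ∧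
        Z₁ t * Z₂ t = ψ t) := by
  rcases le_total (‖Wa‖) (‖Za‖) with hord | hord
  · exact stmt_7_core a b hab ε hε ψ hψc hψb Za Wa Zb Wb hfa hfb hZa hZb hord heq.ge
  · obtain ⟨P, Q, hPc, hQc, hPa, hQa, hPb, hQb, hprop⟩ :=
      stmt_7_core a b hab ε hε ψ hψc hψb Wa Za Wb Zb (by rw [mul_comm]; exact hfa)
        (by rw [mul_comm]; exact hfb) hWa hWb hord heq.le
    exact ⟨Q, P, hQc, hPc, hQa, hPa, hQb, hPb, fun t ht =>
      ⟨(hprop t ht).2.1, (hprop t ht).1, by rw [mul_comm]; exact (hprop t ht).2.2⟩⟩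

/-- Gluing two continuous functions on adjacent intervals. -/
lemma stmt_7_glue {f g : ℝ → ℂ} {a m b : ℝ} (ham : a ≤ m) (hmb : m ≤ b)
    (hf : ContinuousOn f (Set.Icc a m)) (hg : ContinuousOn g (Set.Icc m b))
    (hfg : f m = g m) :
    ContinuousOn ((Set.Iic m).piecewise f g) (Set.Icc a b) := by
  have hfr : frontier (Set.Iic m) = {m} := frontier_Iic
  have H : Set.Icc a m ∩ frontier (Set.Iic m) = Set.Icc m b ∩ frontier (Set.Iic m) := by
    rw [hfr]
    rw [Set.inter_eq_self_of_subset_right (by simp [ham]),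
      Set.inter_eq_self_of_subset_right (by simp [hmb])]
  have heq : Set.EqOn f g (Set.Icc a m ∩ frontier (Set.Iic m)) := by
    intro x hx
    rw [hfr] at hx
    rcases hx with ⟨_, hx2⟩
    rw [Set.mem_singleton_iff] at hx2
    rw [hx2]; exact hfg
  have h := continuousOn_piecewise_ite hf hg H heq
  have hite : (Set.Iic m).ite (Set.Icc a m) (Set.Icc m b) = Set.Icc a b := by
    rw [Set.ite]
    have h1 : Set.Icc a m ∩ Set.Iic m = Set.Icc a m :=
      Set.inter_eq_self_of_subset_left (fun x hx => hx.2)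
    have h2 : Set.Icc m b \ Set.Iic m = Set.Ioc m b := by
      ext x
      simp only [Set.mem_diff, Set.mem_Icc, Set.mem_Iic, Set.mem_Ioc, not_le]
      constructor
      · rintro ⟨⟨_, h2⟩, h3⟩; exact ⟨h3, h2⟩
      · rintro ⟨h1', h2⟩; exact ⟨⟨h1'.le, h2⟩, h1'⟩
    rw [h1, h2, Set.Icc_union_Ioc_eq_Icc ham hmb]
  rwa [hite] at h

/-- Factorisation with prescribed data at both endpoints: if `Z_a W_a = ψ(a)`,
`Z_b W_b = ψ(b)`, all of modulus at most `ε`, and `‖ψ‖_∞ ≤ ε²`, then there is a continuous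
factorisation `Z₁ Z₂ = ψ` with the prescribed endpoint values and bounded by `ε`. -/
theorem stmt_7 (a b : ℝ) (hab : a < b) (ε : ℝ) (hε : 0 < ε) (ψ : ℝ → ℂ)
    (hψc : ContinuousOn ψ (Set.Icc a b))
    (hψb : ∀ t ∈ Set.Icc a b, ‖ψ t‖ ≤ ε ^ 2)
    (Za Wa Zb Wb : ℂ)
    (hfa : Za * Wa = ψ a) (hfb : Zb * Wb = ψ b)
    (hZa : ‖Za‖ ≤ ε) (hWa : ‖Wa‖ ≤ ε)
    (hZb : ‖Zb‖ ≤ ε) (hWb : ‖Wb‖ ≤ ε) :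
    ∃ Z₁ Z₂ : ℝ → ℂ, ContinuousOn Z₁ (Set.Icc a b) ∧ ContinuousOn Z₂ (Set.Icc a b) ∧
      Z₁ a = Za ∧ Z₂ a = Wa ∧ Z₁ b = Zb ∧ Z₂ b = Wb ∧
      (∀ t ∈ Set.Icc a b, ‖Z₁ t‖ ≤ ε ∧ ‖Z₂ t‖ ≤ ε ∧
        Z₁ t * Z₂ t = ψ t) := by
  set m : ℝ := (a + b) / 2 with hm
  have ham : a < m := by rw [hm]; linarith
  have hmb : m < b := by rw [hm]; linarith
  have hmem : m ∈ Set.Icc a b := ⟨ham.le, hmb.le⟩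
  obtain ⟨z, hz⟩ := IsAlgClosed.exists_pow_nat_eq (ψ m) zero_lt_two
  have hzz : z * z = ψ m := by rw [← hz]; ring
  have hzabs : ‖z‖ ≤ ε := by
    have h1 : ‖z‖ ^ 2 ≤ ε ^ 2 := by
      rw [← norm_pow, hz]; exact hψb m hmem
    nlinarith [norm_nonneg z]
  -- left half
  obtain ⟨F₁, F₂, hF₁c, hF₂c, hF₁a, hF₂a, hF₁m, hF₂m, hFp⟩ :=
    stmt_7_half a m ham ε hε ψ (hψc.mono (Set.Icc_subset_Icc le_rfl hmb.le))
      (fun t ht => hψb t (Set.Icc_subset_Icc le_rfl hmb.le ht))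
      Za Wa z z hfa hzz hZa hWa hzabs hzabs rfl
  -- right half (apply half lemma with interval reversed roles: equal moduli at LEFT endpoint;
  -- reuse by flipping the interval is messy, instead note the half lemma proof is symmetric:
  -- we use the core lemma directly with ordering cases at the right endpoint)
  have hψcr : ContinuousOn ψ (Set.Icc m b) := hψc.mono (Set.Icc_subset_Icc ham.le le_rfl)
  have hψbr : ∀ t ∈ Set.Icc m b, ‖ψ t‖ ≤ ε ^ 2 :=
    fun t ht => hψb t (Set.Icc_subset_Icc ham.le le_rfl ht)
  have hright : ∃ G₁ G₂ : ℝ → ℂ, ContinuousOn G₁ (Set.Icc m b) ∧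
      ContinuousOn G₂ (Set.Icc m b) ∧ G₁ m = z ∧ G₂ m = z ∧ G₁ b = Zb ∧ G₂ b = Wb ∧
      (∀ t ∈ Set.Icc m b, ‖G₁ t‖ ≤ ε ∧ ‖G₂ t‖ ≤ ε ∧
        G₁ t * G₂ t = ψ t) := by
    rcases le_total (‖Wb‖) (‖Zb‖) with hord | hord
    · exact stmt_7_core m b hmb ε hε ψ hψcr hψbr z z Zb Wb hzz hfb hzabs hZb le_rfl hord
    · obtain ⟨P, Q, hPc, hQc, hPm, hQm, hPb, hQb, hprop⟩ :=
        stmt_7_core m b hmb ε hε ψ hψcr hψbr z z Wb Zb hzz (by rw [mul_comm]; exact hfb)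
          hzabs hWb le_rfl hord
      exact ⟨Q, P, hQc, hPc, hQm, hPm, hQb, hPb, fun t ht =>
        ⟨(hprop t ht).2.1, (hprop t ht).1, by rw [mul_comm]; exact (hprop t ht).2.2⟩⟩
  obtain ⟨G₁, G₂, hG₁c, hG₂c, hG₁m, hG₂m, hG₁b, hG₂b, hGp⟩ := hright
  classical
  refine ⟨(Set.Iic m).piecewise F₁ G₁, (Set.Iic m).piecewise F₂ G₂,
    stmt_7_glue ham.le hmb.le hF₁c hG₁c (by rw [hF₁m, hG₁m]),
    stmt_7_glue ham.le hmb.le hF₂c hG₂c (by rw [hF₂m, hG₂m]), ?_, ?_, ?_, ?_, ?_⟩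
  · rw [Set.piecewise_eq_of_mem _ _ _ (by simp [Set.mem_Iic, ham.le] : a ∈ Set.Iic m)]
    exact hF₁a
  · rw [Set.piecewise_eq_of_mem _ _ _ (by simp [Set.mem_Iic, ham.le] : a ∈ Set.Iic m)]
    exact hF₂a
  · rw [Set.piecewise_eq_of_notMem _ _ _ (by simp [Set.mem_Iic, not_le, hmb] : b ∉ Set.Iic m)]
    exact hG₁b
  · rw [Set.piecewise_eq_of_notMem _ _ _ (by simp [Set.mem_Iic, not_le, hmb] : b ∉ Set.Iic m)]
    exact hG₂b
  · intro t ht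
    by_cases h : t ≤ m
    · have htm : t ∈ Set.Icc a m := ⟨ht.1, h⟩
      rw [Set.piecewise_eq_of_mem (Set.Iic m) F₁ G₁ (Set.mem_Iic.mpr h),
        Set.piecewise_eq_of_mem (Set.Iic m) F₂ G₂ (Set.mem_Iic.mpr h)]
      exact hFp t htm
    · have htm : t ∈ Set.Icc m b := ⟨(not_le.1 h).le, ht.2⟩
      rw [Set.piecewise_eq_of_notMem (Set.Iic m) F₁ G₁ (by simpa using h),
        Set.piecewise_eq_of_notMem (Set.Iic m) F₂ G₂ (by simpa using h)]
      exact hGp t htm
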